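/- Let G be a strongly connected signed digraph. Then G is structurally unbalanced if and only if the improved Laplacian potential function Φ_e is positive definite, i.e., Φ_e(x) > 0 for every nonzero x ∈ ℝⁿ (equivalently, Φ_e(x) ≥ 0 for all x and Φ_e(x) = 0 implies x = 0). -/
import Mathlib


open Matrix BigOperators Filter

/-- In-degree of node `i`: sum of absolute values of the `i`-th row of `A`. -/
noncomputable def inDeg {n : ℕ} (A : Matrix (Fin n) (Fin n) ℝ) (i : Fin n) : ℝ := ∑ j, |A i j|

/-- Laplacian `L = Δ − A` of the signed digraph with adjacency matrix `A`. -/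
noncomputable def lapOf {n : ℕ} (A : Matrix (Fin n) (Fin n) ℝ) : Matrix (Fin n) (Fin n) ℝ :=
  Matrix.diagonal (inDeg A) - A

/-- Laplacian `L̄ = Δ − Ā` of the induced unsigned digraph. -/
noncomputable def lapBar {n : ℕ} (A : Matrix (Fin n) (Fin n) ℝ) : Matrix (Fin n) (Fin n) ℝ :=
  Matrix.diagonal (inDeg A) - Matrix.of (fun i j => |A i j|)

/-- `det(L̄_ii)`: determinant of `L̄` with its `i`-th row and column removed. -/
noncomputable def minorDet {n : ℕ} (A : Matrix (Fin n) (Fin n) ℝ) (i : Fin n) : ℝ :=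
  Matrix.det ((lapBar A).submatrix (fun k : {j : Fin n // j ≠ i} => (k : Fin n))
    (fun k : {j : Fin n // j ≠ i} => (k : Fin n)))

/-- `W = diag(det(L̄_11), …, det(L̄_nn))`. -/
noncomputable def Wmat {n : ℕ} (A : Matrix (Fin n) (Fin n) ℝ) : Matrix (Fin n) (Fin n) ℝ :=
  Matrix.diagonal (minorDet A)

/-- Mirror adjacency matrix `Â = (W·A + Aᵀ·W)/2`. -/
noncomputable def mirrorAdj {n : ℕ} (A : Matrix (Fin n) (Fin n) ℝ) : Matrix (Fin n) (Fin n) ℝ :=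
  (1/2 : ℝ) • (Wmat A * A + Aᵀ * Wmat A)

/-- Mirror Laplacian `L̂ = (W·L + Lᵀ·W)/2`. -/
noncomputable def mirrorLap {n : ℕ} (A : Matrix (Fin n) (Fin n) ℝ) : Matrix (Fin n) (Fin n) ℝ :=
  (1/2 : ℝ) • (Wmat A * lapOf A + (lapOf A)ᵀ * Wmat A)

/-- `(j, i)` is a directed edge when `a_ij ≠ 0`; strong connectivity: a directed
path between every ordered pair of distinct nodes. -/
def StronglyConnected {n : ℕ} (A : Matrix (Fin n) (Fin n) ℝ) : Prop :=
  ∀ i j : Fin n, i ≠ j → Relation.TransGen (fun u v => A v u ≠ 0) i j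

/-- `σ` is the diagonal of a gauge transformation: each entry is `±1`. -/
def IsGauge {n : ℕ} (σ : Fin n → ℝ) : Prop := ∀ i, σ i = 1 ∨ σ i = -1

/-- Structural balance: there is a gauge transformation `D = diag σ` with all entries
of `D·A·D` (entrywise `σ i * A i j * σ j`) nonnegative. -/
def StructBalanced {n : ℕ} (A : Matrix (Fin n) (Fin n) ℝ) : Prop :=
  ∃ σ : Fin n → ℝ, IsGauge σ ∧ ∀ i j, 0 ≤ σ i * A i j * σ j

/-- Improved Laplacian potential function
`Φ_e(x) = Σ_i Σ_j det(L̄_ii)·|a_ij|·(x_i − sgn(a_ij)·x_j)²`. -/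
noncomputable def PhiE {n : ℕ} (A : Matrix (Fin n) (Fin n) ℝ) (x : Fin n → ℝ) : ℝ :=
  ∑ i, ∑ j, minorDet A i * |A i j| * (x i - Real.sign (A i j) * x j) ^ 2

lemma inDeg_pos {n : ℕ} (hn : 2 ≤ n) (A : Matrix (Fin n) (Fin n) ℝ)
    (hsc : StronglyConnected A) (k : Fin n) : 0 < inDeg A k := by
  have : Nontrivial (Fin n) := Fin.nontrivial_iff_two_le.2 hn
  obtain ⟨j, hj⟩ := exists_ne k
  obtain ⟨b, -, hb⟩ := Relation.TransGen.tail'_iff.1 (hsc j k hj)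
  refine Finset.sum_pos' (fun l _ => abs_nonneg _) ⟨b, Finset.mem_univ b, ?_⟩
  exact abs_pos.2 hb

lemma minorDet_pos {n : ℕ} (hn : 2 ≤ n) (A : Matrix (Fin n) (Fin n) ℝ)
    (hsc : StronglyConnected A) (i : Fin n) : 0 < minorDet A i := by
  classical
  have hΔ : ∀ k, 0 < inDeg A k := inDeg_pos hn A hsc
  set Ab : Matrix (Fin n) (Fin n) ℝ := Matrix.of (fun i j => |A i j|) with hAb
  set M : ℝ → Matrix {j : Fin n // j ≠ i} {j : Fin n // j ≠ i} ℝ :=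
    fun t => (Matrix.diagonal (inDeg A) - t • Ab).submatrix
      (fun k : {j : Fin n // j ≠ i} => (k : Fin n)) (fun k : {j : Fin n // j ≠ i} => (k : Fin n))
    with hM
  -- kernel triviality for t ∈ [0,1]
  have hker : ∀ t ∈ Set.Icc (0:ℝ) 1, ∀ y, (M t).mulVec y = 0 → y = 0 := by
    intro t ht y hy
    set z : Fin n → ℝ := fun j => if h : j = i then 0 else y ⟨j, h⟩ with hz
    have hzi : z i = 0 := by simp [hz]
    have hrow : ∀ k : Fin n, k ≠ i → inDeg A k * z k = t * ∑ j, |A k j| * z j := by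
      intro k hk
      have h0 : ∑ l : {j : Fin n // j ≠ i},
          ((Matrix.diagonal (inDeg A) - t • Ab) k (l : Fin n)) * y l = 0 := by
        have := congrFun hy ⟨k, hk⟩
        simpa [Matrix.mulVec, dotProduct, hM, Matrix.submatrix_apply] using this
      have h1 : ∑ l : {j : Fin n // j ≠ i},
          ((Matrix.diagonal (inDeg A) - t • Ab) k (l : Fin n)) * z (l : Fin n) = 0 := by
        rw [← h0]
        refine Finset.sum_congr rfl (fun l _ => ?_)
        simp [hz, l.prop]
      have h2 : ∑ j ∈ Finset.univ.erase i,
          ((Matrix.diagonal (inDeg A) - t • Ab) k j) * z j = 0 := by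
        rw [Finset.sum_subtype (p := fun j => j ≠ i) (Finset.univ.erase i) (fun x => by simp)
          (fun j => ((Matrix.diagonal (inDeg A) - t • Ab) k j) * z j)]
        exact h1
      have h3 : ∑ j, ((Matrix.diagonal (inDeg A) - t • Ab) k j) * z j = 0 := by
        rw [← Finset.add_sum_erase _ _ (Finset.mem_univ i), h2, hzi]
        ring
      simp only [Matrix.sub_apply, Matrix.smul_apply, smul_eq_mul, Matrix.diagonal_apply,
        hAb, Matrix.of_apply, sub_mul, ite_mul, zero_mul, mul_assoc] at h3
      rw [Finset.sum_sub_distrib, Finset.sum_ite_eq, ← Finset.mul_sum] at h3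
      simp only [Finset.mem_univ, if_true] at h3
      linarith
    -- key: any vector satisfying such rows with value 0 at i has no positive entries
    have key : ∀ w : Fin n → ℝ,
        (∀ k : Fin n, k ≠ i → inDeg A k * w k = t * ∑ j, |A k j| * w j) →
        w i = 0 → ∀ k, w k ≤ 0 := by
      intro w hw hwi k
      by_contra hk
      push_neg at hk
      have : Nontrivial (Fin n) := Fin.nontrivial_iff_two_le.2 hn
      have hne : (Finset.univ : Finset (Fin n)).Nonempty := Finset.univ_nonempty
      set m := Finset.univ.sup' hne w with hm
      have hmw : ∀ j, w j ≤ m := fun j => Finset.le_sup' w (Finset.mem_univ j)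
      have hmpos : 0 < m := lt_of_lt_of_le hk (hmw k)
      obtain ⟨k0, -, hk0⟩ := Finset.exists_mem_eq_sup' hne w
      have hk0' : w k0 = m := (hm.trans hk0).symm
      have hk0i : k0 ≠ i := by
        intro h; rw [h, hwi] at hk0'; exact absurd hk0' (ne_of_gt hmpos).symm
      rcases eq_or_lt_of_le ht.2 with ht1 | ht1
      · -- t = 1 : equality case, propagate along edges
        have step : ∀ v : Fin n, w v = m → ∀ u, A v u ≠ 0 → w u = m := by
          intro v hv u hu
          have hvi : v ≠ i := by
            intro h; rw [h, hwi] at hv; exact absurd hv.symm (ne_of_gt hmpos)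
          have h2 := hw v hvi
          rw [ht1, one_mul, hv] at h2
          have h3 : ∑ j, |A v j| * (m - w j) = 0 := by
            have e : ∑ j, |A v j| * (m - w j)
                = (∑ j, |A v j|) * m - ∑ j, |A v j| * w j := by
              rw [Finset.sum_mul]
              rw [← Finset.sum_sub_distrib]
              exact Finset.sum_congr rfl (fun j _ => by ring)
            rw [e, ← inDeg]
            linarith
          have h4 := (Finset.sum_eq_zero_iff_of_nonneg
            (fun j _ => mul_nonneg (abs_nonneg _) (by linarith [hmw j]))).1 h3 u (Finset.mem_univ u)
          rcases mul_eq_zero.1 h4 with h | h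
          · exact absurd h (abs_ne_zero.2 hu)
          · linarith
        have prop : ∀ u v : Fin n, Relation.TransGen (fun a b => A b a ≠ 0) u v →
            w v = m → w u = m := by
          intro u v h
          induction h with
          | single h => exact fun hv => step _ hv _ h
          | tail hab hbc ih => exact fun hv => ih (step _ hv _ hbc)
        have := prop i k0 (hsc i k0 (Ne.symm hk0i)) hk0'
        rw [hwi] at this
        exact absurd this.symm (ne_of_gt hmpos)
      · -- t < 1 : strict diagonal dominance
        have h2 := hw k0 hk0i
        have hsum : ∑ j, |A k0 j| * w j ≤ inDeg A k0 * m := by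
          rw [inDeg, Finset.sum_mul]
          exact Finset.sum_le_sum (fun j _ => mul_le_mul_of_nonneg_left (hmw j) (abs_nonneg _))
        have hpos : 0 < inDeg A k0 * m := mul_pos (hΔ k0) hmpos
        rw [hk0'] at h2
        nlinarith [ht.1]
    have hz0 : ∀ j, z j = 0 := by
      intro j
      have h1 := key z hrow hzi j
      have h2 := key (fun j => -z j) (fun k hk => by
        have := hrow k hk
        simp only [mul_neg, Finset.sum_neg_distrib]
        linarith) (by simp [hzi]) j
      simp only [neg_nonpos] at h2
      linarith
    funext l
    have := hz0 l.val
    simpa [hz, l.prop] using this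
  have hdet : ∀ t ∈ Set.Icc (0:ℝ) 1, (M t).det ≠ 0 := by
    intro t ht h
    obtain ⟨v, hv, hv0⟩ := Matrix.exists_mulVec_eq_zero_iff.2 h
    exact hv (hker t ht v hv0)
  have hcont : Continuous fun t => (M t).det := by
    apply Continuous.matrix_det
    apply continuous_matrix
    intro k l
    simp only [hM, Matrix.submatrix_apply, Matrix.sub_apply, Matrix.smul_apply, smul_eq_mul]
    fun_prop
  have h0 : 0 < (M 0).det := by
    have e : M 0 = Matrix.diagonal (fun k : {j : Fin n // j ≠ i} => inDeg A k.val) := by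
      rw [hM]
      simp only [zero_smul, sub_zero]
      rw [Matrix.submatrix_diagonal _ _ Subtype.val_injective]
      rfl
    rw [e, Matrix.det_diagonal]
    exact Finset.prod_pos fun k _ => hΔ k.val
  have h1 : minorDet A i = (M 1).det := by
    rw [hM]
    simp only [one_smul]
    rfl
  by_contra hle
  push_neg at hle
  have hne1 := hdet 1 (by norm_num)
  have hlt : (M 1).det < 0 := by
    rw [h1] at hle
    exact lt_of_le_of_ne hle hne1
  have := intermediate_value_Icc' (by norm_num : (0:ℝ) ≤ 1) hcont.continuousOn
  obtain ⟨s, hs, hfs⟩ := this ⟨le_of_lt hlt, le_of_lt h0⟩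
  exact hdet s hs hfs

lemma sign_mul_self' {x : ℝ} (h : x ≠ 0) : Real.sign x * x = |x| := by
  rcases h.lt_or_gt with h | h
  · rw [Real.sign_of_neg h, abs_of_neg h]; ring
  · rw [Real.sign_of_pos h, abs_of_pos h]; ring

lemma abs_sign' {x : ℝ} (h : x ≠ 0) : |Real.sign x| = 1 := by
  rcases h.lt_or_gt with h | h
  · rw [Real.sign_of_neg h]; norm_num
  · rw [Real.sign_of_pos h]; norm_num

lemma phiE_zero_of_balanced {n : ℕ} (A : Matrix (Fin n) (Fin n) ℝ) (σ : Fin n → ℝ)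
    (hg : IsGauge σ) (hb : ∀ i j, 0 ≤ σ i * A i j * σ j) : PhiE A σ = 0 := by
  rw [PhiE]
  refine Finset.sum_eq_zero (fun i _ => Finset.sum_eq_zero (fun j _ => ?_))
  by_cases hA : A i j = 0
  · simp [hA]
  · have hb' := hb i j
    have hσj2 : σ j * σ j = 1 := by rcases hg j with h | h <;> rw [h] <;> ring
    have hs : Real.sign (A i j) = σ i * σ j := by
      rcases hg i with h1 | h1 <;> rcases hg j with h2 | h2 <;> rw [h1, h2] at hb' ⊢
      · rw [Real.sign_of_pos (lt_of_le_of_ne (by linarith) (Ne.symm hA))]; norm_num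
      · rw [Real.sign_of_neg (lt_of_le_of_ne (by linarith) hA)]; norm_num
      · rw [Real.sign_of_neg (lt_of_le_of_ne (by linarith) hA)]; norm_num
      · rw [Real.sign_of_pos (lt_of_le_of_ne (by linarith) (Ne.symm hA))]; norm_num
    have : σ i - Real.sign (A i j) * σ j = 0 := by
      rw [hs, mul_assoc, hσj2, mul_one, sub_self]
    rw [this]
    ring

/-- `G` is structurally unbalanced iff `Φ_e` is positive definite. -/
theorem unbalanced_iff_phiE_posdef (n : ℕ) (hn : 2 ≤ n)
    (A : Matrix (Fin n) (Fin n) ℝ)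
    (hdiag : ∀ i, A i i = 0) (hdigon : ∀ i j, 0 ≤ A i j * A j i)
    (hsc : StronglyConnected A) :
    ¬ StructBalanced A ↔ ∀ x : Fin n → ℝ, x ≠ 0 → 0 < PhiE A x := by
  constructor
  · intro hnb x hx
    have hw : ∀ k, 0 < minorDet A k := minorDet_pos hn A hsc
    have hterm : ∀ a b : Fin n,
        0 ≤ minorDet A a * |A a b| * (x a - Real.sign (A a b) * x b) ^ 2 :=
      fun a b => mul_nonneg (mul_nonneg (hw a).le (abs_nonneg _)) (sq_nonneg _)
    have hΦ0 : 0 ≤ PhiE A x := Finset.sum_nonneg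
      (fun a _ => Finset.sum_nonneg fun b _ => hterm a b)
    rcases hΦ0.lt_or_eq with h | h
    · exact h
    exfalso
    apply hnb
    -- all terms vanish
    have hz : ∀ a b : Fin n, A a b ≠ 0 → x a = Real.sign (A a b) * x b := by
      intro a b hab
      have h1 := (Finset.sum_eq_zero_iff_of_nonneg
        (fun a _ => Finset.sum_nonneg fun b _ => hterm a b)).1 h.symm a (Finset.mem_univ a)
      have h2 := (Finset.sum_eq_zero_iff_of_nonneg
        (fun b _ => hterm a b)).1 h1 b (Finset.mem_univ b)
      rcases mul_eq_zero.1 h2 with h3 | h3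
      · rcases mul_eq_zero.1 h3 with h4 | h4
        · exact absurd h4 (ne_of_gt (hw a))
        · exact absurd h4 (abs_ne_zero.2 hab)
      · have := pow_eq_zero_iff (n := 2) (by norm_num) |>.1 h3
        linarith [this]
    -- all coordinates have the same absolute value
    have step : ∀ a b : Fin n, A b a ≠ 0 → |x b| = |x a| := by
      intro a b hba
      rw [hz b a hba, abs_mul, abs_sign' hba, one_mul]
    have habs : ∀ u v : Fin n, |x u| = |x v| := by
      have prop : ∀ u v : Fin n, Relation.TransGen (fun a b => A b a ≠ 0) u v →
          |x u| = |x v| := by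
        intro u v h'
        induction h' with
        | single h1 => exact (step _ _ h1).symm
        | tail hab hbc ih => rw [ih, (step _ _ hbc)]
      intro u v
      rcases eq_or_ne u v with rfl | h'
      · rfl
      · exact prop u v (hsc u v h')
    obtain ⟨p, hp⟩ := Function.ne_iff.1 hx
    have hp' : x p ≠ 0 := by simpa using hp
    set c : ℝ := |x p| with hc
    have hcpos : 0 < c := abs_pos.2 hp'
    have habs' : ∀ j, |x j| = c := fun j => habs j p
    refine ⟨fun j => x j / c, fun j => ?_, fun a b => ?_⟩
    · rcases (abs_eq hcpos.le).1 (habs' j) with h' | h'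
      · left; show x j / c = 1; rw [h', div_self (ne_of_gt hcpos)]
      · right; show x j / c = -1; rw [h', neg_div, div_self (ne_of_gt hcpos)]
    · show 0 ≤ x a / c * A a b * (x b / c)
      by_cases hab : A a b = 0
      · simp [hab]
      · have e : (x a / c) * A a b * (x b / c)
            = (Real.sign (A a b) * A a b) * (x b) ^ 2 / c ^ 2 := by
          rw [hz a b hab]; ring
        rw [e, sign_mul_self' hab]
        positivity
  · intro hpd hb
    obtain ⟨σ, hg, hbb⟩ := hb
    have h0 : PhiE A σ = 0 := phiE_zero_of_balanced A σ hg hbb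
    have hne : σ ≠ 0 := by
      intro h
      have h1 := congrFun h ⟨0, by omega⟩
      rcases hg ⟨0, by omega⟩ with h2 | h2 <;> rw [h2] at h1 <;> norm_num at h1
    have := hpd σ hne
    rw [h0] at this
    exact lt_irrefl 0 this
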